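/- (Observability Gramian sandwich under persistency of excitation.) Let v₁, …, v_S ∈ ℝⁿ and let R₁, …, R_S be real symmetric n×n matrices such that there exist constants 0 < α₁ ≤ α₂ with α₁·Iₙ ⪯ R_l ⪯ α₂·Iₙ (i.e., R_l − α₁ Iₙ and α₂ Iₙ − R_l are positive semidefinite) for every l; in particular each R_l is invertible. Suppose there exist constants β₁ > 0 and β₂ such that β₁·Iₙ ⪯ Σ_{l=1}^S v_l v_lᵀ ⪯ β₂·Iₙ. Then the n²×n² Gramian W := Σ_{l=1}^S (v_l v_lᵀ) ⊗ R_l^{-1} satisfies (β₁/α₂)·I_{n²} ⪯ W ⪯ (β₂/α₁)·I_{n²}; in particular W is positive definite. -/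

import Mathlib

open scoped Kronecker

open Matrix
open scoped Kronecker

private lemma psd_smul {n : Type*} [Fintype n] {c : ℝ} {A : Matrix n n ℝ}
    (hc : 0 ≤ c) (hA : A.PosSemidef) : (c • A).PosSemidef := by
  refine Matrix.PosSemidef.of_dotProduct_mulVec_nonneg ?_ fun x => ?_
  · unfold Matrix.IsHermitian
    rw [conjTranspose_smul, hA.1.eq]
    simp
  · rw [smul_mulVec, dotProduct_smul, smul_eq_mul]
    exact mul_nonneg hc (hA.dotProduct_mulVec_nonneg x)

private lemma psd_smul_one {n : Type*} [Fintype n] [DecidableEq n] {c : ℝ} (hc : 0 ≤ c) :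
    (c • (1 : Matrix n n ℝ)).PosSemidef := psd_smul hc Matrix.PosSemidef.one

private lemma pd_smul_one {n : Type*} [Fintype n] [DecidableEq n] {c : ℝ} (hc : 0 < c) :
    (c • (1 : Matrix n n ℝ)).PosDef := by
  refine Matrix.PosDef.of_dotProduct_mulVec_pos (psd_smul_one hc.le).1 fun x hx => ?_
  rw [smul_mulVec, dotProduct_smul, one_mulVec, smul_eq_mul]
  exact mul_pos hc (dotProduct_star_self_pos_iff.mpr hx)

private lemma psd_vecMulVec {n : Type*} [Fintype n] (v : n → ℝ) :
    (Matrix.vecMulVec v v).PosSemidef := by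
  refine Matrix.PosSemidef.of_dotProduct_mulVec_nonneg ?_ fun x => ?_
  · ext i j
    simp [Matrix.vecMulVec_apply, Matrix.conjTranspose_apply, mul_comm]
  · have h : Matrix.vecMulVec v v *ᵥ x = (v ⬝ᵥ x) • v := by
      ext i
      simp only [Matrix.mulVec, Matrix.vecMulVec_apply, dotProduct, Pi.smul_apply,
        smul_eq_mul, Finset.sum_mul]
      exact Finset.sum_congr rfl fun j _ => by ring
    rw [h, dotProduct_smul]
    have : star x ⬝ᵥ v = v ⬝ᵥ x := by simp [dotProduct, mul_comm]
    rw [smul_eq_mul, this]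
    exact mul_self_nonneg _

private lemma psd_kron {n m : Type*} [Fintype n] [Fintype m] [DecidableEq n] [DecidableEq m]
    {A : Matrix n n ℝ} {B : Matrix m m ℝ}
    (hA : A.PosSemidef) (hB : B.PosSemidef) : (A ⊗ₖ B).PosSemidef := by
  exact hA.kronecker hB

open scoped MatrixOrder in
private noncomputable def Matrix.PosSemidef.sqrt {n : Type*} [Fintype n] [DecidableEq n]
    {A : Matrix n n ℝ} (_ : A.PosSemidef) : Matrix n n ℝ := CFC.sqrt A

open scoped MatrixOrder in
private lemma Matrix.PosSemidef.posSemidef_sqrt {n : Type*} [Fintype n] [DecidableEq n]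
    {A : Matrix n n ℝ} (hA : A.PosSemidef) : hA.sqrt.PosSemidef :=
  (CFC.sqrt_nonneg A).posSemidef

open scoped MatrixOrder in
private lemma Matrix.PosSemidef.sqrt_mul_self {n : Type*} [Fintype n] [DecidableEq n]
    {A : Matrix n n ℝ} (hA : A.PosSemidef) : hA.sqrt * hA.sqrt = A :=
  CFC.sqrt_mul_sqrt_self A hA.nonneg

private lemma conj_sqrt_inv {n : Type*} [Fintype n] [DecidableEq n]
    {R : Matrix n n ℝ} (hR : R.PosDef) {A : Matrix n n ℝ} (hA : A.PosSemidef) :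
    (hR.inv.posSemidef.sqrt * A * hR.inv.posSemidef.sqrt).PosSemidef := by
  have := hA.conjTranspose_mul_mul_same hR.inv.posSemidef.sqrt
  rwa [hR.inv.posSemidef.posSemidef_sqrt.1.eq] at this

private lemma sqrt_inv_conj_self {n : Type*} [Fintype n] [DecidableEq n]
    {R : Matrix n n ℝ} (hR : R.PosDef) :
    hR.inv.posSemidef.sqrt * R * hR.inv.posSemidef.sqrt = 1 := by
  set Q := hR.inv.posSemidef.sqrt with hQdef
  have hQQ : Q * Q = R⁻¹ := hR.inv.posSemidef.sqrt_mul_self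
  have hRu : IsUnit R.det := hR.det_pos.ne'.isUnit
  have hQu : IsUnit Q.det := by
    have h1 : Q.det * Q.det = R⁻¹.det := by rw [← Matrix.det_mul, hQQ]
    have h2 : R⁻¹.det ≠ 0 := hR.inv.det_pos.ne'
    exact (left_ne_zero_of_mul (h1 ▸ h2)).isUnit
  have hRQ : R = Q⁻¹ * Q⁻¹ := by
    rw [← Matrix.mul_inv_rev, hQQ, Matrix.nonsing_inv_nonsing_inv _ hRu]
  rw [hRQ]
  calc Q * (Q⁻¹ * Q⁻¹) * Q = (Q * Q⁻¹) * (Q⁻¹ * Q) := by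
        simp only [mul_assoc]
    _ = 1 := by rw [Matrix.mul_nonsing_inv _ hQu, Matrix.nonsing_inv_mul _ hQu, one_mul]

private lemma inv_upper {n : Type*} [Fintype n] [DecidableEq n]
    {R : Matrix n n ℝ} (hR : R.PosDef) {c : ℝ}
    (h : (c • (1 : Matrix n n ℝ) - R).PosSemidef) :
    (c • R⁻¹ - (1 : Matrix n n ℝ)).PosSemidef := by
  have hc := conj_sqrt_inv hR h
  set Q := hR.inv.posSemidef.sqrt with hQdef
  have hQQ : Q * Q = R⁻¹ := hR.inv.posSemidef.sqrt_mul_self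
  have key : Q * (c • (1 : Matrix n n ℝ) - R) * Q = c • R⁻¹ - 1 := by
    rw [mul_sub, sub_mul, mul_smul_comm, mul_one, smul_mul_assoc, hQQ,
      sqrt_inv_conj_self hR]
  rwa [key] at hc

private lemma inv_lower {n : Type*} [Fintype n] [DecidableEq n]
    {R : Matrix n n ℝ} (hR : R.PosDef) {c : ℝ}
    (h : (R - c • (1 : Matrix n n ℝ)).PosSemidef) :
    ((1 : Matrix n n ℝ) - c • R⁻¹).PosSemidef := by
  have hc := conj_sqrt_inv hR h
  set Q := hR.inv.posSemidef.sqrt with hQdef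
  have hQQ : Q * Q = R⁻¹ := hR.inv.posSemidef.sqrt_mul_self
  have key : Q * (R - c • (1 : Matrix n n ℝ)) * Q = 1 - c • R⁻¹ := by
    rw [mul_sub, sub_mul, mul_smul_comm, mul_one, smul_mul_assoc, hQQ,
      sqrt_inv_conj_self hR]
  rwa [key] at hc

private lemma kronecker_sub' {n m : Type*} (A : Matrix n n ℝ) (B C : Matrix m m ℝ) :
    A ⊗ₖ (B - C) = A ⊗ₖ B - A ⊗ₖ C := by
  ext ⟨i, j⟩ ⟨k, l⟩
  simp [Matrix.kroneckerMap_apply, mul_sub]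

private lemma sub_kronecker' {n m : Type*} (A B : Matrix n n ℝ) (C : Matrix m m ℝ) :
    (A - B) ⊗ₖ C = A ⊗ₖ C - B ⊗ₖ C := by
  ext ⟨i, j⟩ ⟨k, l⟩
  simp [Matrix.kroneckerMap_apply, sub_mul]

private lemma sum_kronecker' {n m : Type*} {S : ℕ} (A : Fin S → Matrix n n ℝ)
    (B : Matrix m m ℝ) :
    (∑ l, A l) ⊗ₖ B = ∑ l, (A l ⊗ₖ B) := by
  ext ⟨i, j⟩ ⟨k, l⟩
  simp [Matrix.kroneckerMap_apply, Matrix.sum_apply, Finset.sum_mul]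

private lemma psd_sum {m : Type*} [Fintype m] {S : ℕ} {f : Fin S → Matrix m m ℝ}
    (h : ∀ l, (f l).PosSemidef) : (∑ l, f l).PosSemidef := by
  classical
  refine Finset.sum_induction f _ (fun a b ha hb => ha.add hb) Matrix.PosSemidef.zero
    fun l _ => h l

/-- Observability Gramian sandwich under persistency of excitation:
if `α₁ Iₙ ⪯ R_l ⪯ α₂ Iₙ` (so each `R_l` is invertible) and
`β₁ Iₙ ⪯ Σ_l v_l v_lᵀ ⪯ β₂ Iₙ` with `β₁ > 0`, then
`(β₁/α₂) I ⪯ W := Σ_l (v_l v_lᵀ) ⊗ R_l⁻¹ ⪯ (β₂/α₁) I`, and `W` is positive definite. -/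
theorem observability_gramian_sandwich
    {n : ℕ} {S : ℕ}
    (v : Fin S → (Fin n → ℝ))
    (R : Fin S → Matrix (Fin n) (Fin n) ℝ)
    (hRsymm : ∀ l, (R l).IsSymm)
    (α₁ α₂ : ℝ) (hα₁ : 0 < α₁) (hα₁₂ : α₁ ≤ α₂)
    (hRlow : ∀ l, (R l - α₁ • (1 : Matrix (Fin n) (Fin n) ℝ)).PosSemidef)
    (hRup : ∀ l, (α₂ • (1 : Matrix (Fin n) (Fin n) ℝ) - R l).PosSemidef)
    (β₁ β₂ : ℝ) (hβ₁ : 0 < β₁)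
    (hVlow : ((∑ l, Matrix.vecMulVec (v l) (v l)) - β₁ • (1 : Matrix (Fin n) (Fin n) ℝ)).PosSemidef)
    (hVup : (β₂ • (1 : Matrix (Fin n) (Fin n) ℝ) - ∑ l, Matrix.vecMulVec (v l) (v l)).PosSemidef) :
    (∀ l, IsUnit (R l))
    ∧ ((∑ l, Matrix.vecMulVec (v l) (v l) ⊗ₖ (R l)⁻¹)
        - (β₁ / α₂) • (1 : Matrix (Fin n × Fin n) (Fin n × Fin n) ℝ)).PosSemidef
    ∧ ((β₂ / α₁) • (1 : Matrix (Fin n × Fin n) (Fin n × Fin n) ℝ)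
        - ∑ l, Matrix.vecMulVec (v l) (v l) ⊗ₖ (R l)⁻¹).PosSemidef
    ∧ (∑ l, Matrix.vecMulVec (v l) (v l) ⊗ₖ (R l)⁻¹).PosDef := by
  have hα₂ : (0:ℝ) < α₂ := hα₁.trans_le hα₁₂
  have hRpd : ∀ l, (R l).PosDef := fun l => by
    have := Matrix.PosDef.posSemidef_add (hRlow l) (pd_smul_one hα₁)
    rwa [sub_add_cancel] at this
  have hMlow : ∀ l, ((R l)⁻¹ - α₂⁻¹ • (1 : Matrix (Fin n) (Fin n) ℝ)).PosSemidef := fun l => by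
    have h2 := psd_smul (inv_pos.mpr hα₂).le (inv_upper (hRpd l) (hRup l))
    rwa [smul_sub, smul_smul, inv_mul_cancel₀ hα₂.ne', one_smul] at h2
  have hMup : ∀ l, (α₁⁻¹ • (1 : Matrix (Fin n) (Fin n) ℝ) - (R l)⁻¹).PosSemidef := fun l => by
    have h2 := psd_smul (inv_pos.mpr hα₁).le (inv_lower (hRpd l) (hRlow l))
    rwa [smul_sub, smul_smul, inv_mul_cancel₀ hα₁.ne', one_smul] at h2
  have hlow : ((∑ l, Matrix.vecMulVec (v l) (v l) ⊗ₖ (R l)⁻¹)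
      - (β₁ / α₂) • (1 : Matrix (Fin n × Fin n) (Fin n × Fin n) ℝ)).PosSemidef := by
    have key : (∑ l, Matrix.vecMulVec (v l) (v l) ⊗ₖ (R l)⁻¹)
        - (β₁ / α₂) • (1 : Matrix (Fin n × Fin n) (Fin n × Fin n) ℝ)
        = (∑ l, Matrix.vecMulVec (v l) (v l) ⊗ₖ ((R l)⁻¹ - α₂⁻¹ • 1))
          + α₂⁻¹ • (((∑ l, Matrix.vecMulVec (v l) (v l)) - β₁ • 1)
              ⊗ₖ (1 : Matrix (Fin n) (Fin n) ℝ)) := by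
      simp only [kronecker_sub', sub_kronecker', sum_kronecker', Matrix.kronecker_smul,
        Matrix.smul_kronecker, Matrix.one_kronecker_one, Finset.sum_sub_distrib, smul_sub,
        smul_smul, Finset.smul_sum, div_eq_mul_inv]
      module
    rw [key]
    exact (psd_sum fun l => psd_kron (psd_vecMulVec (v l)) (hMlow l)).add
      (psd_smul (inv_pos.mpr hα₂).le (psd_kron hVlow Matrix.PosSemidef.one))
  have hup : ((β₂ / α₁) • (1 : Matrix (Fin n × Fin n) (Fin n × Fin n) ℝ)
      - ∑ l, Matrix.vecMulVec (v l) (v l) ⊗ₖ (R l)⁻¹).PosSemidef := by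
    have key : (β₂ / α₁) • (1 : Matrix (Fin n × Fin n) (Fin n × Fin n) ℝ)
        - (∑ l, Matrix.vecMulVec (v l) (v l) ⊗ₖ (R l)⁻¹)
        = (∑ l, Matrix.vecMulVec (v l) (v l) ⊗ₖ (α₁⁻¹ • 1 - (R l)⁻¹))
          + α₁⁻¹ • ((β₂ • 1 - ∑ l, Matrix.vecMulVec (v l) (v l))
              ⊗ₖ (1 : Matrix (Fin n) (Fin n) ℝ)) := by
      simp only [kronecker_sub', sub_kronecker', sum_kronecker', Matrix.kronecker_smul,
        Matrix.smul_kronecker, Matrix.one_kronecker_one, Finset.sum_sub_distrib, smul_sub,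
        smul_smul, Finset.smul_sum, div_eq_mul_inv]
      module
    rw [key]
    exact (psd_sum fun l => psd_kron (psd_vecMulVec (v l)) (hMup l)).add
      (psd_smul (inv_pos.mpr hα₁).le (psd_kron hVup Matrix.PosSemidef.one))
  refine ⟨fun l => (hRpd l).isUnit, hlow, hup, ?_⟩
  have := Matrix.PosDef.posSemidef_add hlow (pd_smul_one (div_pos hβ₁ hα₂))
  rwa [sub_add_cancel] at this
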